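/- There exists a finite semifield with exactly 64 elements whose multiplication is commutative but not associative. -/
import Mathlib

abbrev D6 : Type := Fin 6 → ZMod 2

def multD (a b : D6) : D6 :=
  fun k =>
    if k.val = 0 then a 0 * b 0 + a 1 * b 4 + a 1 * b 5 + a 2 * b 2 + a 2 * b 4 + a 3 * b 4 + a 4 * b 1 + a 4 * b 2 + a 4 * b 3 + a 4 * b 5 + a 5 * b 1 + a 5 * b 4 + a 5 * b 5
    else     if k.val = 1 then a 0 * b 1 + a 1 * b 0 + a 1 * b 1 + a 1 * b 3 + a 1 * b 4 + a 1 * b 5 + a 2 * b 2 + a 2 * b 3 + a 2 * b 4 + a 2 * b 5 + a 3 * b 1 + a 3 * b 2 + a 3 * b 5 + a 4 * b 1 + a 4 * b 2 + a 4 * b 4 + a 5 * b 1 + a 5 * b 2 + a 5 * b 3 + a 5 * b 5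
    else     if k.val = 2 then a 0 * b 2 + a 1 * b 1 + a 1 * b 2 + a 1 * b 4 + a 2 * b 0 + a 2 * b 1 + a 2 * b 3 + a 2 * b 4 + a 3 * b 2 + a 3 * b 3 + a 4 * b 1 + a 4 * b 2 + a 4 * b 5 + a 5 * b 4
    else     if k.val = 3 then a 0 * b 3 + a 1 * b 1 + a 1 * b 2 + a 2 * b 1 + a 2 * b 2 + a 2 * b 3 + a 2 * b 4 + a 2 * b 5 + a 3 * b 0 + a 3 * b 2 + a 3 * b 3 + a 3 * b 4 + a 4 * b 2 + a 4 * b 3 + a 4 * b 4 + a 4 * b 5 + a 5 * b 2 + a 5 * b 4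
    else     if k.val = 4 then a 0 * b 4 + a 1 * b 1 + a 1 * b 2 + a 1 * b 3 + a 2 * b 1 + a 2 * b 2 + a 3 * b 1 + a 3 * b 3 + a 4 * b 0 + a 4 * b 5 + a 5 * b 4 + a 5 * b 5
    else a 0 * b 5 + a 1 * b 2 + a 1 * b 3 + a 2 * b 1 + a 2 * b 4 + a 2 * b 5 + a 3 * b 1 + a 3 * b 5 + a 4 * b 2 + a 4 * b 5 + a 5 * b 0 + a 5 * b 2 + a 5 * b 3 + a 5 * b 4 + a 5 * b 5

def oneD : D6 := ![1,0,0,0,0,0]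

def decF (x : Fin 64) : D6 := fun i => if Nat.testBit x.val i.val then 1 else 0

def encF (a : D6) : Fin 64 :=
  ⟨(a 0).val + 2*(a 1).val + 4*(a 2).val + 8*(a 3).val + 16*(a 4).val + 32*(a 5).val, by
    have h0 := (a 0).val_lt; have h1 := (a 1).val_lt; have h2 := (a 2).val_lt
    have h3 := (a 3).val_lt; have h4 := (a 4).val_lt; have h5 := (a 5).val_lt
    omega⟩

set_option maxRecDepth 4000 in
theorem dec_enc : ∀ a : D6, decF (encF a) = a := by decide

set_option maxHeartbeats 2000000 in
theorem multD_add (a b c : D6) : multD a (b + c) = multD a b + multD a c := by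
  funext k
  rcases k with ⟨v, hv⟩
  interval_cases v <;> (simp only [multD, Pi.add_apply, Nat.reduceEqDiff, reduceIte]; ring)

set_option maxHeartbeats 2000000 in
theorem add_multD (a b c : D6) : multD (a + b) c = multD a c + multD b c := by
  funext k
  rcases k with ⟨v, hv⟩
  interval_cases v <;> (simp only [multD, Pi.add_apply, Nat.reduceEqDiff, reduceIte]; ring)

set_option maxHeartbeats 2000000 in
theorem multD_comm (a b : D6) : multD a b = multD b a := by
  funext k
  rcases k with ⟨v, hv⟩
  interval_cases v <;> (simp only [multD, Pi.add_apply, Nat.reduceEqDiff, reduceIte]; ring)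

set_option maxRecDepth 4000 in
theorem oneD_mul_aux : ∀ x : Fin 64, multD oneD (decF x) = decF x := by decide

theorem oneD_mul (a : D6) : multD oneD a = a := by
  have := oneD_mul_aux (encF a); rwa [dec_enc] at this

theorem mul_oneD (a : D6) : multD a oneD = a := by rw [multD_comm]; exact oneD_mul a

set_option maxRecDepth 8000 in
set_option maxHeartbeats 400000000 in
theorem noZeroDiv_aux : ∀ x y : Fin 64, multD (decF x) (decF y) = 0 → x = 0 ∨ y = 0 := by
  decide

theorem decF_zero : decF 0 = 0 := by decide

theorem noZeroDivD (a b : D6) (h : multD a b = 0) : a = 0 ∨ b = 0 := by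
  have hx := dec_enc a; have hy := dec_enc b
  rcases noZeroDiv_aux (encF a) (encF b) (by rw [hx, hy]; exact h) with h0 | h0
  · left; rw [← hx, h0, decF_zero]
  · right; rw [← hy, h0, decF_zero]

theorem nonassocD : ¬ ∀ a b c : D6, multD (multD a b) c = multD a (multD b c) := by
  intro h
  exact absurd (h ![0,1,0,0,0,0] ![0,1,0,0,0,0] ![0,0,1,0,0,0]) (by decide)

theorem cardD6 : Nat.card D6 = 64 := by
  rw [Nat.card_eq_fintype_card]
  simp

/-- A finite semifield: a finite nonassociative ring with identity in which
the product of any two nonzero elements is nonzero. -/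
structure FiniteSemifield where
  D : Type
  [addGroup : AddCommGroup D]
  mul : D → D → D
  one : D
  finite : Finite D
  mul_add : ∀ a b c : D, mul a (b + c) = mul a b + mul a c
  add_mul : ∀ a b c : D, mul (a + b) c = mul a c + mul b c
  one_mul : ∀ a : D, mul one a = a
  mul_one : ∀ a : D, mul a one = a
  one_ne_zero : one ≠ (0 : D)
  noZeroDiv : ∀ a b : D, mul a b = 0 → a = 0 ∨ b = 0

attribute [instance] FiniteSemifield.addGroup

/-- There exists a finite semifield of order 64 whose multiplication is
commutative but not associative. -/
theorem exists_commutative_proper_semifield64 :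
    ∃ S : FiniteSemifield, Nat.card S.D = 64 ∧
      (∀ a b : S.D, S.mul a b = S.mul b a) ∧
      ¬ ∀ a b c : S.D, S.mul (S.mul a b) c = S.mul a (S.mul b c) := by
  refine ⟨{ D := D6, mul := multD, one := oneD, finite := inferInstance,
            mul_add := multD_add, add_mul := add_multD,
            one_mul := oneD_mul, mul_one := mul_oneD,
            one_ne_zero := by decide, noZeroDiv := noZeroDivD }, ?_, ?_, ?_⟩
  · exact cardD6
  · exact multD_comm
  · exact nonassocD
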